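/- Let a1, a2, a3 be distinct reduced residue classes modulo q. Then {a1, a2, a3} is almost unanimous mod q if and only if a1² ≡ a2² ≡ a3² (mod q). -/
import Mathlib

/-- If an abelian group is the union of three proper subgroups, the square of every
element lies in the first one. -/
lemma sq_mem_of_union_three {G : Type*} [CommGroup G] (A B C : Subgroup G)
    (cover : ∀ g : G, g ∈ A ∨ g ∈ B ∨ g ∈ C)
    (hB : ∃ g, g ∉ B) (hC : ∃ g, g ∉ C) :
    ∀ g : G, g ^ 2 ∈ A := by
  intro x
  by_cases hxA : x ∈ A
  · exact A.pow_mem hxA 2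
  -- find a ∈ A with a ∉ B, a ∉ C
  obtain ⟨a, haA, haB, haC⟩ : ∃ a, a ∈ A ∧ a ∉ B ∧ a ∉ C := by
    by_contra h
    push_neg at h
    have hcov2 : ∀ g : G, g ∈ B ∨ g ∈ C := by
      intro g
      rcases cover g with hg | hg | hg
      · rcases (cover g).imp_left (fun _ => hg) with _ | hg' | hg'
        · by_cases hgB : g ∈ B
          · exact Or.inl hgB
          · by_cases hgC : g ∈ C
            · exact Or.inr hgC
            · exact absurd hgC (fun hc => hc (by tauto))
        · exact Or.inl hg'
        · exact Or.inr hg'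
      · exact Or.inl hg
      · exact Or.inr hg
    obtain ⟨b, hb⟩ := hB
    obtain ⟨c, hc⟩ := hC
    have hbC : b ∈ C := (hcov2 b).resolve_left hb
    have hcB : c ∈ B := (hcov2 c).resolve_right hc
    rcases hcov2 (b * c) with hbc | hbc
    · exact hb (by simpa using B.mul_mem hbc (B.inv_mem hcB))
    · exact hc (by simpa using C.mul_mem (C.inv_mem hbC) hbc)
  have hxaA : x * a ∉ A := fun h => hxA (by simpa using A.mul_mem h (A.inv_mem haA))
  have key : ∀ (H K : Subgroup G), (∀ g : G, g ∈ A ∨ g ∈ H ∨ g ∈ K) →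
      a ∉ H → a ∉ K → x ∈ H → x * a ∈ K → x ^ 2 ∈ A := by
    intro H K cov haH haK hxH hxaK
    rcases cov (x ^ 2 * a) with h2 | h2 | h2
    · have : x ^ 2 = (x ^ 2 * a) * a⁻¹ := by group
      rw [this]; exact A.mul_mem h2 (A.inv_mem haA)
    · exfalso
      have hx2 : x ^ 2 ∈ H := H.pow_mem hxH 2
      exact haH (by simpa using H.mul_mem (H.inv_mem hx2) h2)
    · exfalso
      have hxK : x ∈ K := by
        have : x = (x ^ 2 * a) * (x * a)⁻¹ := by group
        rw [this]; exact K.mul_mem h2 (K.inv_mem hxaK)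
      exact haK (by simpa using K.mul_mem (K.inv_mem hxK) hxaK)
  rcases cover x with hx | hx | hx
  · exact absurd hx hxA
  · rcases cover (x * a) with h | h | h
    · exact absurd h hxaA
    · exact absurd (by simpa using B.mul_mem (B.inv_mem hx) h) haB
    · exact key B C cover haB haC hx h
  · rcases cover (x * a) with h | h | h
    · exact absurd h hxaA
    · exact key C B (fun g => by rcases cover g with h|h|h <;> tauto) haC haB hx h
    · exact absurd (by simpa using C.mul_mem (C.inv_mem hx) h) haC

lemma dirichlet_sep {q : ℕ} (a b : (ZMod q)ˣ) (h : a ≠ b) :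
    ∃ φ : (ZMod q)ˣ →* ℂˣ, φ a ≠ φ b := by
  have : Finite (ZMod q)ˣ := by
    cases q with
    | zero => exact inferInstanceAs (Finite ℤˣ)
    | succ n => infer_instance
  have hne : a * b⁻¹ ≠ 1 := fun hc => h (by
    have := mul_inv_eq_one.mp hc; exact this)
  have : NeZero (Monoid.exponent (ZMod q)ˣ) := ⟨Monoid.exponent_ne_zero_of_finite⟩
  obtain ⟨φ, hφ⟩ := CommGroup.exists_apply_ne_one_of_hasEnoughRootsOfUnity (ZMod q)ˣ ℂ hne
  refine ⟨φ, fun hc => hφ ?_⟩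
  rw [map_mul, map_inv, hc, mul_inv_cancel]

theorem almost_unanimous_triple_iff_equal_squares
    {q : ℕ} (a1 a2 a3 : (ZMod q)ˣ)
    (h12 : a1 ≠ a2) (h13 : a1 ≠ a3) (h23 : a2 ≠ a3) :
    (∀ χ : DirichletCharacter ℂ q,
        χ a1 = χ a2 ∨ χ a1 = χ a3 ∨ χ a2 = χ a3) ↔
      (a1 ^ 2 = a2 ^ 2 ∧ a2 ^ 2 = a3 ^ 2) := by
  constructor
  · intro hAU
    -- translate to monoid homs
    have hAU' : ∀ φ : (ZMod q)ˣ →* ℂˣ, φ a1 = φ a2 ∨ φ a1 = φ a3 ∨ φ a2 = φ a3 := by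
      intro φ
      have := hAU (MulChar.ofUnitHom φ)
      simp only [MulChar.ofUnitHom_eq, MulChar.equivToUnitHom_symm_coe] at this
      rcases this with h | h | h
      · exact Or.inl (Units.ext h)
      · exact Or.inr (Or.inl (Units.ext h))
      · exact Or.inr (Or.inr (Units.ext h))
    -- subgroups of the character group
    let S : (ZMod q)ˣ → (ZMod q)ˣ → Subgroup ((ZMod q)ˣ →* ℂˣ) :=
      fun a b =>
      { carrier := {φ | φ a = φ b}
        mul_mem' := fun h1 h2 => by
          simp only [Set.mem_setOf_eq, MonoidHom.mul_apply] at *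
          rw [h1, h2]
        one_mem' := rfl
        inv_mem' := fun h => by
          simp only [Set.mem_setOf_eq, MonoidHom.inv_apply] at *
          rw [h] }
    have memS : ∀ (a b : (ZMod q)ˣ) (φ), φ ∈ S a b ↔ φ a = φ b := fun _ _ _ => Iff.rfl
    have cover : ∀ φ, φ ∈ S a1 a2 ∨ φ ∈ S a1 a3 ∨ φ ∈ S a2 a3 := hAU'
    have prop12 : ∃ φ, φ ∉ S a1 a2 := dirichlet_sep a1 a2 h12
    have prop13 : ∃ φ, φ ∉ S a1 a3 := dirichlet_sep a1 a3 h13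
    have prop23 : ∃ φ, φ ∉ S a2 a3 := dirichlet_sep a2 a3 h23
    have sq12 : ∀ φ : (ZMod q)ˣ →* ℂˣ, φ ^ 2 ∈ S a1 a2 :=
      sq_mem_of_union_three (S a1 a2) (S a1 a3) (S a2 a3) cover prop13 prop23
    have sq13 : ∀ φ : (ZMod q)ˣ →* ℂˣ, φ ^ 2 ∈ S a1 a3 :=
      sq_mem_of_union_three (S a1 a3) (S a1 a2) (S a2 a3) (fun g => by rcases cover g with h|h|h <;> tauto) prop12 prop23
    have hsq : ∀ (a b : (ZMod q)ˣ), (∀ φ : (ZMod q)ˣ →* ℂˣ, φ ^ 2 ∈ S a b) → a ^ 2 = b ^ 2 := by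
      intro a b hmem
      by_contra hne
      obtain ⟨φ, hφ⟩ := dirichlet_sep (a ^ 2) (b ^ 2) hne
      have := hmem φ
      rw [memS] at this
      simp only [MonoidHom.pow_apply] at this
      exact hφ (by rw [map_pow, map_pow, this])
    have e12 := hsq a1 a2 sq12
    have e13 := hsq a1 a3 sq13
    exact ⟨e12, e12 ▸ e13⟩
  · rintro ⟨e12, e23⟩ χ
    have k12 : χ a1 ^ 2 = χ a2 ^ 2 := by
      rw [← map_pow, ← map_pow, ← Units.val_pow_eq_pow_val, ← Units.val_pow_eq_pow_val, e12]
    have k23 : χ a2 ^ 2 = χ a3 ^ 2 := by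
      rw [← map_pow, ← map_pow, ← Units.val_pow_eq_pow_val, ← Units.val_pow_eq_pow_val, e23]
    by_cases h1 : χ a1 = χ a2
    · exact Or.inl h1
    · have hfac : (χ a1 - χ a2) * (χ a1 + χ a2) = 0 := by linear_combination k12
      have hn : χ a1 = -χ a2 := by
        rcases mul_eq_zero.mp hfac with h | h
        · exact absurd (sub_eq_zero.mp h) h1
        · exact eq_neg_of_add_eq_zero_left h
      by_cases h2 : χ a2 = χ a3
      · exact Or.inr (Or.inr h2)
      · have hfac2 : (χ a2 - χ a3) * (χ a2 + χ a3) = 0 := by linear_combination k23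
        have hn2 : χ a2 = -χ a3 := by
          rcases mul_eq_zero.mp hfac2 with h | h
          · exact absurd (sub_eq_zero.mp h) h2
          · exact eq_neg_of_add_eq_zero_left h
        refine Or.inr (Or.inl ?_)
        rw [hn, hn2, neg_neg]
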